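/- Let G be a simple graph on a vertex set V of size n, with n ≥ 2, admitting an orientation of maximum out-degree at most A, where A is a natural number. Let C ⊆ V with |C| = k, suppose k ≥ n^{3/4} (as real numbers), and suppose every vertex of C has at least A/(2·log₂ n) neighbors inside C. Call a vertex v ∉ C C-light if it has at most n^{1/4} neighbors in C, and call a vertex u ∈ C bad if it has more than 100·n^{1/2}·log₂ n C-light neighbors. Then the number of edges of G with both endpoints bad is at most 1/25 times the number of edges of G with both endpoints in C. -/

import Mathlib

set_option maxHeartbeats 1000000
open Finset
private lemma pair_count_fst {V : Type*} [Fintype V] [DecidableEq V] (r : V → V → Prop) [DecidableRel r] :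
    (univ.filter fun p : V × V => r p.1 p.2).card
      = ∑ u, (univ.filter fun v => r u v).card := by
  rw [card_eq_sum_card_fiberwise (f := Prod.fst) (t := univ) (fun x _ => mem_univ _)]
  refine Finset.sum_congr rfl fun u _ => ?_
  refine Finset.card_bij' (fun p _ => p.2) (fun v _ => (u, v)) ?_ ?_ ?_ ?_ <;>
    aesop

private lemma pair_count_snd {V : Type*} [Fintype V] [DecidableEq V] (r : V → V → Prop) [DecidableRel r] :
    (univ.filter fun p : V × V => r p.1 p.2).card
      = ∑ v, (univ.filter fun u => r u v).card := by
  rw [card_eq_sum_card_fiberwise (f := Prod.snd) (t := univ) (fun x _ => mem_univ _)]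
  refine Finset.sum_congr rfl fun v _ => ?_
  refine Finset.card_bij' (fun p _ => p.1) (fun u _ => (u, v)) ?_ ?_ ?_ ?_ <;>
    aesop
open Finset

private lemma orient_bound {V : Type*} [Fintype V] (G H : SimpleGraph V)
    (hle : ∀ a b, H.Adj a b → G.Adj a b)
    (S : Finset V) (hS : ∀ a b, H.Adj a b → a ∈ S)
    (A : ℕ) (o : G.edgeSet → V) (ho : ∀ e : G.edgeSet, o e ∈ (e : Sym2 V))
    (hA : ∀ v : V, {e : G.edgeSet | o e = v}.ncard ≤ A) :
    H.edgeSet.ncard ≤ A * S.card := by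
  classical
  have hsub : H.edgeSet ⊆ G.edgeSet := by
    intro e he
    induction e using Sym2.ind with
    | _ a b => exact hle a b he
  rw [Set.ncard_eq_toFinset_card' H.edgeSet]
  set E : Finset (Sym2 V) := H.edgeSet.toFinset with hE
  rcases E.eq_empty_or_nonempty with h | hne
  · simp [h]
  have hVne : Nonempty V := by
    obtain ⟨e, _⟩ := hne
    induction e using Sym2.ind with
    | _ a b => exact ⟨a⟩
  inhabit V
  set f : Sym2 V → V := fun e => if h : e ∈ G.edgeSet then o ⟨e, h⟩ else default with hf
  have hmem : ∀ e ∈ E, f e ∈ S := by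
    intro e he
    rw [hE, Set.mem_toFinset] at he
    have hG : e ∈ G.edgeSet := hsub he
    have hoe : f e ∈ e := by rw [hf]; simp only [hG, dif_pos]; exact ho ⟨e, hG⟩
    revert he hoe
    induction e using Sym2.ind with
    | _ a b =>
      intro he hoe
      rw [Sym2.mem_iff] at hoe
      rcases hoe with h1 | h1 <;> rw [h1]
      · exact hS a b he
      · exact hS b a he.symm
  rw [Finset.card_eq_sum_card_fiberwise hmem]
  calc ∑ v ∈ S, (E.filter fun e => f e = v).card
      ≤ ∑ _v ∈ S, A := by
        refine Finset.sum_le_sum fun v _ => ?_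
        have hss : (↑(E.filter fun e => f e = v) : Set (Sym2 V))
            ⊆ Subtype.val '' {e : G.edgeSet | o e = v} := by
          intro e he
          simp only [Finset.coe_filter, Set.mem_setOf_eq, hE, Set.mem_toFinset] at he
          obtain ⟨heH, hev⟩ := he
          have hG : e ∈ G.edgeSet := hsub heH
          refine ⟨⟨e, hG⟩, ?_, rfl⟩
          rw [hf] at hev
          simpa [hG] using hev
        calc (E.filter fun e => f e = v).card
            = (↑(E.filter fun e => f e = v) : Set (Sym2 V)).ncard := (Set.ncard_coe_finset _).symm
          _ ≤ (Subtype.val '' {e : G.edgeSet | o e = v}).ncard :=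
              Set.ncard_le_ncard hss (Set.toFinite _)
          _ = {e : G.edgeSet | o e = v}.ncard :=
              Set.ncard_image_of_injective _ Subtype.val_injective
          _ ≤ A := hA v
    _ = A * S.card := by rw [Finset.sum_const, smul_eq_mul, mul_comm]
open Finset

private def SimpleGraph.restrictP {V : Type*} (G : SimpleGraph V) (P : V → Prop) : SimpleGraph V where
  Adj a b := G.Adj a b ∧ P a ∧ P b
  symm := ⟨fun a b h => ⟨h.1.symm, h.2.2, h.2.1⟩⟩
  loopless := ⟨fun a h => G.loopless.irrefl a h.1⟩

private lemma restrictP_edgeSet {V : Type*} (G : SimpleGraph V) (P : V → Prop) :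
    {e : Sym2 V | e ∈ G.edgeSet ∧ ∀ u ∈ e, P u} = (G.restrictP P).edgeSet := by
  ext e
  induction e using Sym2.ind with
  | _ a b =>
    simp only [Set.mem_setOf_eq, SimpleGraph.mem_edgeSet, Sym2.mem_iff, SimpleGraph.restrictP]
    constructor
    · rintro ⟨h, hall⟩
      exact ⟨h, hall a (Or.inl rfl), hall b (Or.inr rfl)⟩
    · rintro ⟨h, ha, hb⟩
      exact ⟨h, fun u hu => hu.elim (fun h' => h' ▸ ha) (fun h' => h' ▸ hb)⟩

private lemma two_mul_ncard_edgeSet {V : Type*} [Fintype V] [DecidableEq V] (H : SimpleGraph V) [DecidableRel H.Adj] :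
    2 * H.edgeSet.ncard = ∑ v, (univ.filter (H.Adj v)).card := by
  classical
  have h1 : H.edgeSet.ncard = H.edgeFinset.card := by
    rw [← SimpleGraph.coe_edgeFinset, Set.ncard_coe_finset]
  rw [h1, ← SimpleGraph.sum_degrees_eq_twice_card_edges]
  exact Finset.sum_congr rfl fun v _ => by
    rw [SimpleGraph.degree, SimpleGraph.neighborFinset_eq_filter]


/-- Let `G` be a simple graph on `n ≥ 2` vertices admitting an orientation of
maximum out-degree at most `A`, and let `C` be a vertex set of size
`k ≥ n^(3/4)` in which every vertex has at least `A/(2 log₂ n)` neighbors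
inside `C`. With `C`-light vertices being the vertices outside `C` with at
most `n^(1/4)` neighbors in `C`, and bad vertices being the vertices of `C`
with more than `100 · n^(1/2) · log₂ n` `C`-light neighbors, the number of
edges with both endpoints bad is at most `1/25` of the number of edges with
both endpoints in `C`. -/
theorem stmt4 {V : Type*} [Fintype V] (G : SimpleGraph V)
    (n k A : ℕ) (hn : 2 ≤ n) (hV : Fintype.card V = n)
    (C : Set V) (hk : C.ncard = k) (hk34 : (n : ℝ) ^ ((3 : ℝ) / 4) ≤ (k : ℝ))
    (hdeg : ∀ u ∈ C,
      (A : ℝ) / (2 * Real.logb 2 n) ≤ ({w : V | G.Adj u w ∧ w ∈ C}.ncard : ℝ))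
    (o : G.edgeSet → V) (ho : ∀ e : G.edgeSet, o e ∈ (e : Sym2 V))
    (hA : ∀ v : V, {e : G.edgeSet | o e = v}.ncard ≤ A) :
    (({e : Sym2 V | e ∈ G.edgeSet ∧ ∀ u ∈ e, u ∈ C ∧
        100 * (n : ℝ) ^ ((1 : ℝ) / 2) * Real.logb 2 n <
          (({v : V | G.Adj u v ∧ v ∉ C ∧
              (({w : V | G.Adj v w ∧ w ∈ C}.ncard : ℝ)) ≤ (n : ℝ) ^ ((1 : ℝ) / 4)}.ncard : ℝ))}.ncard : ℝ))
      ≤ (1 / 25) * ({e : Sym2 V | e ∈ G.edgeSet ∧ ∀ v ∈ e, v ∈ C}.ncard : ℝ) := by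
  classical
  have h2n : (2:ℝ) ≤ (n:ℝ) := by exact_mod_cast hn
  have hn0 : (0:ℝ) < (n:ℝ) := by linarith
  have hR1 : (1:ℝ) ≤ Real.logb 2 n := by
    rw [show (1:ℝ) = Real.logb 2 2 by simp]
    exact Real.logb_le_logb_of_le (by norm_num) (by norm_num) h2n
  have hR0 : (0:ℝ) < Real.logb 2 n := by linarith
  set R := Real.logb 2 n with hRdef
  -- the light and bad predicates
  set lightP : V → Prop := fun v => v ∉ C ∧
      (({w : V | G.Adj v w ∧ w ∈ C}.ncard : ℝ)) ≤ (n : ℝ) ^ ((1 : ℝ) / 4) with hlightP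
  set Pb : V → Prop := fun u => u ∈ C ∧
      100 * (n : ℝ) ^ ((1 : ℝ) / 2) * R <
        (({v : V | G.Adj u v ∧ lightP v}.ncard : ℝ)) with hPb
  -- rewrite both edge sets as edge sets of restricted graphs
  rw [show {e : Sym2 V | e ∈ G.edgeSet ∧ ∀ u ∈ e, u ∈ C ∧
        100 * (n : ℝ) ^ ((1 : ℝ) / 2) * R <
          (({v : V | G.Adj u v ∧ v ∉ C ∧
              (({w : V | G.Adj v w ∧ w ∈ C}.ncard : ℝ)) ≤ (n : ℝ) ^ ((1 : ℝ) / 4)}.ncard : ℝ))}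
      = (G.restrictP Pb).edgeSet from restrictP_edgeSet G Pb,
     show {e : Sym2 V | e ∈ G.edgeSet ∧ ∀ v ∈ e, v ∈ C}
      = (G.restrictP (· ∈ C)).edgeSet from restrictP_edgeSet G (· ∈ C)]
  set Bf : Finset V := univ.filter Pb with hBf
  -- Step 1: bad edges ≤ A * |Bf|
  have h1 : (G.restrictP Pb).edgeSet.ncard ≤ A * Bf.card := by
    refine orient_bound G (G.restrictP Pb) (fun a b h => h.1) Bf (fun a b h => ?_) A o ho hA
    exact Finset.mem_filter.mpr ⟨Finset.mem_univ _, h.2.1⟩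
  -- Step 2: double counting bad–light pairs
  have h3 : (Bf.card : ℝ) * (100 * R) ≤ (k:ℝ) := by
    set r : V → V → Prop := fun u v => Pb u ∧ G.Adj u v ∧ lightP v with hr
    set N := (univ.filter fun p : V × V => r p.1 p.2).card with hN
    have h2a : (Bf.card : ℝ) * (100 * (n:ℝ)^((1:ℝ)/2) * R) ≤ (N:ℝ) := by
      have e1 : N = ∑ u, (univ.filter fun v => r u v).card := pair_count_fst r
      have hlow : ∀ u ∈ Bf, 100 * (n:ℝ)^((1:ℝ)/2) * R
          ≤ ((univ.filter fun v => r u v).card : ℝ) := by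
        intro u hu
        have hPu : Pb u := (Finset.mem_filter.mp hu).2
        have hfe : (univ.filter fun v => r u v) = {v : V | G.Adj u v ∧ lightP v}.toFinset := by
          ext v
          simp only [hr, Finset.mem_filter, Finset.mem_univ, true_and, Set.mem_toFinset,
            Set.mem_setOf_eq]
          exact ⟨fun h => h.2, fun h => ⟨hPu, h⟩⟩
        rw [hfe, ← Set.ncard_eq_toFinset_card']
        simp only [hPb] at hPu
        exact hPu.2.le
      calc (Bf.card : ℝ) * (100 * (n:ℝ)^((1:ℝ)/2) * R)
          = ∑ _u ∈ Bf, 100 * (n:ℝ)^((1:ℝ)/2) * R := by rw [Finset.sum_const, nsmul_eq_mul]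
        _ ≤ ∑ u ∈ Bf, ((univ.filter fun v => r u v).card : ℝ) := Finset.sum_le_sum hlow
        _ ≤ ∑ u, ((univ.filter fun v => r u v).card : ℝ) :=
            Finset.sum_le_sum_of_subset_of_nonneg (Finset.subset_univ _)
              (fun _ _ _ => Nat.cast_nonneg _)
        _ = (N:ℝ) := by rw [e1]; push_cast; ring
    have h2b : (N:ℝ) ≤ (n:ℝ) * (n:ℝ)^((1:ℝ)/4) := by
      have e2 : N = ∑ v, (univ.filter fun u => r u v).card := pair_count_snd r
      have hup : ∀ v : V, ((univ.filter fun u => r u v).card : ℝ) ≤ (n:ℝ)^((1:ℝ)/4) := by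
        intro v
        by_cases hl : lightP v
        · have hsub2 : (univ.filter fun u => r u v) ⊆ {w : V | G.Adj v w ∧ w ∈ C}.toFinset := by
            intro u hu
            rw [Finset.mem_filter] at hu
            simp only [hr] at hu
            rw [Set.mem_toFinset]
            simp only [hPb] at hu
            exact ⟨hu.2.2.1.symm, hu.2.1.1⟩
          have hl2 := hl
          simp only [hlightP] at hl2
          calc ((univ.filter fun u => r u v).card : ℝ)
              ≤ ({w : V | G.Adj v w ∧ w ∈ C}.toFinset.card : ℝ) := by
                exact_mod_cast Finset.card_le_card hsub2
            _ = ({w : V | G.Adj v w ∧ w ∈ C}.ncard : ℝ) := by rw [← Set.ncard_eq_toFinset_card']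
            _ ≤ (n:ℝ)^((1:ℝ)/4) := hl2.2
        · have hemp : (univ.filter fun u => r u v) = ∅ := by
            refine Finset.filter_eq_empty_iff.mpr fun u _ => ?_
            simp only [hr]
            exact fun h => hl h.2.2
          rw [hemp]
          simp only [Finset.card_empty, Nat.cast_zero]
          positivity
      calc (N:ℝ) = ∑ v, ((univ.filter fun u => r u v).card : ℝ) := by rw [e2]; push_cast; ring
        _ ≤ ∑ _v : V, (n:ℝ)^((1:ℝ)/4) := Finset.sum_le_sum fun v _ => hup v
        _ = (n:ℝ) * (n:ℝ)^((1:ℝ)/4) := by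
            rw [Finset.sum_const, nsmul_eq_mul, Finset.card_univ, hV]
    have hpow : (n:ℝ) * (n:ℝ)^((1:ℝ)/4) = (n:ℝ)^((1:ℝ)/2) * (n:ℝ)^((3:ℝ)/4) := by
      rw [← Real.rpow_add hn0]
      nth_rewrite 1 [← Real.rpow_one (n:ℝ)]
      rw [← Real.rpow_add hn0]
      norm_num
    have hs0 : (0:ℝ) < (n:ℝ)^((1:ℝ)/2) := Real.rpow_pos_of_pos hn0 _
    have key : (n:ℝ)^((1:ℝ)/2) * ((Bf.card:ℝ) * (100*R)) ≤ (n:ℝ)^((1:ℝ)/2) * (k:ℝ) := by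
      have t1 : (Bf.card : ℝ) * (100 * (n:ℝ)^((1:ℝ)/2) * R) ≤ (n:ℝ)^((1:ℝ)/2) * (k:ℝ) := by
        refine (h2a.trans h2b).trans ?_
        rw [hpow]
        exact mul_le_mul_of_nonneg_left hk34 hs0.le
      calc (n:ℝ)^((1:ℝ)/2) * ((Bf.card:ℝ) * (100*R))
          = (Bf.card : ℝ) * (100 * (n:ℝ)^((1:ℝ)/2) * R) := by ring
        _ ≤ (n:ℝ)^((1:ℝ)/2) * (k:ℝ) := t1
    exact le_of_mul_le_mul_left key hs0
  -- Step 3: many edges inside C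
  have h4 : (k:ℝ) * ((A:ℝ) / (2 * R)) ≤
      2 * ((G.restrictP (· ∈ C)).edgeSet.ncard : ℝ) := by
    have e3 := two_mul_ncard_edgeSet (G.restrictP (· ∈ C))
    have hdegv : ∀ v ∈ C.toFinset, (A:ℝ) / (2*R)
        ≤ ((univ.filter ((G.restrictP (· ∈ C)).Adj v)).card : ℝ) := by
      intro v hv
      rw [Set.mem_toFinset] at hv
      have hcard : (univ.filter ((G.restrictP (· ∈ C)).Adj v))
          = {w : V | G.Adj v w ∧ w ∈ C}.toFinset := by
        ext w
        simp only [Finset.mem_filter, Finset.mem_univ, true_and]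
        simp only [Finset.mem_filter, Finset.mem_univ, true_and, Set.mem_toFinset,
          Set.mem_setOf_eq, SimpleGraph.restrictP]
        exact ⟨fun h => ⟨h.1, h.2.2⟩, fun h => ⟨h.1, hv, h.2⟩⟩
      rw [hcard, ← Set.ncard_eq_toFinset_card']
      exact hdeg v hv
    have hCcard : C.toFinset.card = k := by rw [← Set.ncard_eq_toFinset_card']; exact hk
    calc (k:ℝ) * ((A:ℝ)/(2*R)) = ∑ _v ∈ C.toFinset, (A:ℝ)/(2*R) := by
          rw [Finset.sum_const, hCcard, nsmul_eq_mul]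
      _ ≤ ∑ v ∈ C.toFinset, ((univ.filter ((G.restrictP (· ∈ C)).Adj v)).card : ℝ) :=
          Finset.sum_le_sum hdegv
      _ ≤ ∑ v, ((univ.filter ((G.restrictP (· ∈ C)).Adj v)).card : ℝ) :=
          Finset.sum_le_sum_of_subset_of_nonneg (Finset.subset_univ _)
            (fun _ _ _ => Nat.cast_nonneg _)
      _ = ((2 * (G.restrictP (· ∈ C)).edgeSet.ncard : ℕ) : ℝ) := by rw [e3]; push_cast; ring
      _ = 2 * ((G.restrictP (· ∈ C)).edgeSet.ncard : ℝ) := by push_cast; ring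
  -- Conclusion
  have hkA : (k:ℝ) * A ≤ 4 * R * ((G.restrictP (· ∈ C)).edgeSet.ncard : ℝ) := by
    have hmul := mul_le_mul_of_nonneg_right h4 (by positivity : (0:ℝ) ≤ 2*R)
    calc (k:ℝ) * A = (k:ℝ) * ((A:ℝ) / (2*R)) * (2*R) := by field_simp
      _ ≤ 2 * ((G.restrictP (· ∈ C)).edgeSet.ncard : ℝ) * (2*R) := hmul
      _ = 4 * R * ((G.restrictP (· ∈ C)).edgeSet.ncard : ℝ) := by ring
  have hABf : (A:ℝ) * Bf.card * (100*R) ≤ (k:ℝ) * A :=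
    calc (A:ℝ) * Bf.card * (100*R) = (A:ℝ) * ((Bf.card:ℝ) * (100*R)) := by ring
      _ ≤ (A:ℝ) * k := mul_le_mul_of_nonneg_left h3 (Nat.cast_nonneg A)
      _ = (k:ℝ) * A := mul_comm _ _
  have hfin : (A:ℝ) * Bf.card ≤ (1/25) * ((G.restrictP (· ∈ C)).edgeSet.ncard : ℝ) := by
    have h := hABf.trans hkA
    nlinarith [h, hR0]
  calc ((G.restrictP Pb).edgeSet.ncard : ℝ) ≤ (A:ℝ) * Bf.card := by exact_mod_cast h1
    _ ≤ _ := hfin
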